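/- Let φ(z) = (z² − 4z + 2)/(z² − 2z + 2), extended to ℙ¹(ℚ) = ℚ ∪ {∞} (note the denominator has no rational roots; φ(∞) = 1). Then φ has no rational preperiodic points: for every α ∈ ℙ¹(ℚ), the forward orbit {φⁿ(α) : n ≥ 0} is infinite, equivalently the map n ↦ φⁿ(α) is injective. -/

import Mathlib

/-!
The map `φ(z) = (z² − 4z + 2)/(z² − 2z + 2)` has no rational preperiodic
points: every forward orbit in ℙ¹(ℚ) is infinite.

We model ℙ¹(ℚ) as `Option ℚ`, with `none` playing the role of ∞;
the denominator has no rational roots and `φ(∞) = 1`.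
-/

/-- The map `φ(z) = (z² − 4z + 2)/(z² − 2z + 2)` on `ℙ¹(ℚ)`, with
`φ(∞) = 1`. -/
def phi11 : Option ℚ → Option ℚ
  | none => some 1
  | some x =>
      if x ^ 2 - 2 * x + 2 = 0 then none
      else some ((x ^ 2 - 4 * x + 2) / (x ^ 2 - 2 * x + 2))

/-- The rational map on ℚ itself. -/
def phiQ (x : ℚ) : ℚ := (x ^ 2 - 4 * x + 2) / (x ^ 2 - 2 * x + 2)

lemma phiQ_denom_pos (x : ℚ) : 0 < x ^ 2 - 2 * x + 2 := by nlinarith [sq_nonneg (x - 1)]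

set_option maxHeartbeats 1000000 in
/-- Key arithmetic lemma: denominators never decrease under `phiQ`, strictly
increase when ≥ 2, and fixed denominator 1 forces `x ∈ {0,1,2}`. -/
lemma phiQ_key (x : ℚ) :
    x.den ≤ (phiQ x).den ∧
    (2 ≤ x.den → x.den < (phiQ x).den) ∧
    ((phiQ x).den = 1 → x.den = 1 → x = 0 ∨ x = 1 ∨ x = 2) := by
  set a : ℤ := x.num with ha
  set b : ℤ := (x.den : ℤ) with hbdef
  have hb : 0 < b := Int.natCast_pos.mpr x.pos
  have hbQ : (b : ℚ) ≠ 0 := by positivity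
  have hx : (a : ℚ) / (b : ℚ) = x := by exact_mod_cast x.num_div_den
  set A : ℤ := a ^ 2 - 4 * a * b + 2 * b ^ 2 with hA
  set B : ℤ := a ^ 2 - 2 * a * b + 2 * b ^ 2 with hB
  have hBpos : 0 < B := by nlinarith [sq_nonneg (a - b)]
  have hBQ : ((B : ℤ) : ℚ) ≠ 0 := by exact_mod_cast hBpos.ne'
  have hden : (x ^ 2 - 2 * x + 2 : ℚ) ≠ 0 := (phiQ_denom_pos x).ne'
  clear_value a b A B
  set q : ℚ := phiQ x with hq
  have hphi : q = (A : ℚ) / (B : ℚ) := by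
    rw [hq]
    simp only [phiQ]
    rw [div_eq_div_iff hden hBQ, ← hx, hA, hB]
    push_cast
    field_simp
  set d : ℤ := (q.den : ℤ) with hddef
  have hd : 0 < d := Int.natCast_pos.mpr q.pos
  have hdQ : ((q.den : ℚ)) ≠ 0 := by
    exact_mod_cast q.pos.ne'
  clear_value q d
  have hcross : q.num * B = A * d := by
    have h1 : (q.num : ℚ) / (q.den : ℚ) = (A : ℚ) / (B : ℚ) := by
      rw [← hphi]; exact q.num_div_den
    rw [div_eq_div_iff hdQ hBQ] at h1
    rw [hddef]
    exact_mod_cast h1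
  have hcopnd : IsCoprime q.num d := by
    rw [Int.isCoprime_iff_gcd_eq_one, hddef]
    simpa [Int.gcd] using q.reduced
  have hdvdB : d ∣ B := by
    have h2 : d ∣ q.num * B := ⟨A, by linarith [hcross]⟩
    exact hcopnd.symm.dvd_of_dvd_mul_left h2
  obtain ⟨t, hBt⟩ := hdvdB
  have htpos : 0 < t := by
    by_contra h
    push_neg at h
    nlinarith
  have hAeq : A = q.num * t := by
    have h2 : (q.num * t) * d = A * d := by
      rw [show (q.num * t) * d = q.num * (d * t) from by ring, ← hBt]; exact hcross
    exact (mul_right_cancel₀ hd.ne' h2).symm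
  have htA : t ∣ A := ⟨q.num, by rw [hAeq]; ring⟩
  have htB : t ∣ B := ⟨d, by rw [hBt]; ring⟩
  have ht2ab : t ∣ 2 * a * b := by
    have h3 : 2 * a * b = B - A := by rw [hA, hB]; ring
    rw [h3]; exact dvd_sub htB htA
  have ht2a3 : t ∣ 2 * a ^ 3 := by
    have h3 : 2 * a ^ 3 = (2 * a) * A + (4 * a) * (2 * a * b) - (2 * b) * (2 * a * b) := by
      rw [hA]; ring
    rw [h3]
    exact dvd_sub (dvd_add (htA.mul_left _) (ht2ab.mul_left _)) (ht2ab.mul_left _)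
  have ht4b3 : t ∣ 4 * b ^ 3 := by
    have h3 : 4 * b ^ 3 = (2 * b) * A - a * (2 * a * b) + (4 * b) * (2 * a * b) := by
      rw [hA]; ring
    rw [h3]
    exact dvd_add (dvd_sub (htA.mul_left _) (ht2ab.mul_left _)) (ht2ab.mul_left _)
  have hab : IsCoprime a b := by
    rw [Int.isCoprime_iff_gcd_eq_one, ha, hbdef]
    simpa [Int.gcd] using x.reduced
  obtain ⟨u, v, huv⟩ := hab.pow (m := 3) (n := 3)
  have ht4 : t ∣ 4 := by
    have h4 : (4 : ℤ) = (2 * u) * (2 * a ^ 3) + v * (4 * b ^ 3) := by linear_combination (-4) * huv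
    rw [h4]
    exact dvd_add (ht2a3.mul_left _) (ht4b3.mul_left _)
  have ht4' : t ≤ 4 := Int.le_of_dvd (by norm_num) ht4
  -- parity analysis: t ≤ 2, and t = 2 forces a even hence b odd
  have hF : t ≤ 2 ∧ (t = 2 → b % 2 = 1) := by
    rcases Int.even_or_odd a with hae | hao
    · -- a even, hence b odd
      obtain ⟨a0, ha0⟩ := hae
      have hbodd : ¬ (2 : ℤ) ∣ b := by
        intro h2b
        have h5 : IsUnit (2 : ℤ) := hab.isUnit_of_dvd' ⟨a0, by omega⟩ h2b
        rw [Int.isUnit_iff] at h5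
        omega
      have hb2 : b % 2 = 1 := by omega
      obtain ⟨c, hc⟩ : ∃ c, b = 2 * c + 1 := ⟨b / 2, by omega⟩
      have hex : ∃ m, A = 2 * (2 * m + 1) :=
        ⟨a0 ^ 2 - 2 * a0 * b + 2 * c ^ 2 + 2 * c, by rw [hA, ha0, hc]; ring⟩
      obtain ⟨m, hmA⟩ := hex
      refine ⟨?_, fun _ => hb2⟩
      interval_cases t
      · norm_num
      · norm_num
      · exfalso; omega
      · exfalso; omega
    · -- a odd : t = 1
      obtain ⟨k, hk⟩ := hao
      have hex : ∃ K, A = 2 * K + 1 :=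
        ⟨2 * k ^ 2 + 2 * k - 2 * (2 * k + 1) * b + b ^ 2, by rw [hA, hk]; ring⟩
      obtain ⟨K, hKA⟩ := hex
      have ht1 : t = 1 := by
        interval_cases t
        · rfl
        · exfalso; omega
        · exfalso; omega
        · exfalso; omega
      exact ⟨by omega, by omega⟩
  obtain ⟨ht2, htb2⟩ := hF
  have hdt : d * t ≤ 2 * d := by nlinarith
  have hBb : b ^ 2 ≤ B := by nlinarith [sq_nonneg (a - b)]
  have h2d : 2 * b - 1 ≤ 2 * d := by nlinarith [sq_nonneg (b - 1)]
  have hbd : b ≤ d := by omega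
  have hbd' : x.den ≤ q.den := by
    have h := hbd; rw [hbdef, hddef] at h; exact_mod_cast h
  refine ⟨hbd', ?_, ?_⟩
  · intro h2b
    have hb2' : (2 : ℤ) ≤ b := by rw [hbdef]; exact_mod_cast h2b
    have hlt : b < d := by
      interval_cases t
      · nlinarith
      · have hb3 : (3 : ℤ) ≤ b := by have := htb2 rfl; omega
        have h3b : 3 * b ≤ 2 * d := by nlinarith
        omega
    have h := hlt; rw [hbdef, hddef] at h; exact_mod_cast h
  · intro hd1 hb1
    have hd1' : d = 1 := by rw [hddef, hd1]; norm_num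
    have hb1' : b = 1 := by rw [hbdef, hb1]; norm_num
    have hBle : B ≤ 2 := by rw [hBt, hd1']; omega
    rw [hB, hb1'] at hBle
    have ha0' : 0 ≤ a := by nlinarith [sq_nonneg a]
    have ha2' : a ≤ 2 := by nlinarith [sq_nonneg (a - 2)]
    have hxa : x = (a : ℚ) := by
      rw [← hx, hb1']; norm_num
    interval_cases a
    · left; rw [hxa]; norm_num
    · right; left; rw [hxa]; norm_num
    · right; right; rw [hxa]; norm_num

/-- No rational point is periodic under `phiQ`. -/
lemma phiQ_no_periodic (x : ℚ) (m : ℕ) (hm : 0 < m) : phiQ^[m] x ≠ x := by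
  intro hcyc
  set D : ℕ → ℕ := fun n => (phiQ^[n] x).den with hD
  have hper : ∀ n, phiQ^[n + m] x = phiQ^[n] x := fun n => by
    rw [Function.iterate_add_apply, hcyc]
  have hmono : Monotone D := monotone_nat_of_le_succ fun n => by
    simp only [hD, Function.iterate_succ_apply']
    exact (phiQ_key _).1
  have hconst : ∀ n, D (n + 1) = D n := fun n => by
    have h1 : D n ≤ D (n + 1) := hmono (Nat.le_succ n)
    have h2 : D (n + 1) ≤ D (n + m) := hmono (by omega)
    have h3 : D (n + m) = D n := by simp only [hD, hper]
    omega
  have hone : ∀ n, D n = 1 := by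
    intro n
    by_contra h
    have h2 : 2 ≤ D n := by
      have := (phiQ^[n] x).pos
      simp only [hD] at h ⊢
      omega
    have h4 := (phiQ_key (phiQ^[n] x)).2.1 h2
    have h3 := hconst n
    simp only [hD, Function.iterate_succ_apply'] at h3
    simp only [hD] at h2
    omega
  have hmem : ∀ n, phiQ^[n] x = 0 ∨ phiQ^[n] x = 1 ∨ phiQ^[n] x = 2 := by
    intro n
    have h1 : (phiQ (phiQ^[n] x)).den = 1 := by
      have h5 := hone (n + 1)
      simpa only [hD, Function.iterate_succ_apply'] using h5
    exact (phiQ_key (phiQ^[n] x)).2.2 h1 (hone n)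
  have e0 : phiQ 0 = 1 := by norm_num [phiQ]
  have e1 : phiQ 1 = -1 := by norm_num [phiQ]
  have e2 : phiQ 2 = -1 := by norm_num [phiQ]
  have i1 : phiQ^[1] x = phiQ (phiQ^[0] x) := Function.iterate_succ_apply' phiQ 0 x
  have i2 : phiQ^[2] x = phiQ (phiQ^[1] x) := Function.iterate_succ_apply' phiQ 1 x
  simp only [Function.iterate_zero_apply] at i1
  rcases hmem 0 with h | h | h <;>
    simp only [Function.iterate_zero_apply] at h
  · -- x = 0 : orbit 0, 1, -1
    have h1 : phiQ^[1] x = 1 := by rw [i1, h, e0]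
    have h2 : phiQ^[2] x = -1 := by rw [i2, h1, e1]
    rcases hmem 2 with h'' | h'' | h'' <;> rw [h2] at h'' <;> norm_num at h''
  · -- x = 1 : orbit 1, -1
    have h1 : phiQ^[1] x = -1 := by rw [i1, h, e1]
    rcases hmem 1 with h' | h' | h' <;> rw [h1] at h' <;> norm_num at h'
  · -- x = 2 : orbit 2, -1
    have h1 : phiQ^[1] x = -1 := by rw [i1, h, e2]
    rcases hmem 1 with h' | h' | h' <;> rw [h1] at h' <;> norm_num at h'

/-- `phi11` on rational points. -/
lemma phi11_some (x : ℚ) : phi11 (some x) = some (phiQ x) := by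
  simp [phi11, phiQ, (phiQ_denom_pos x).ne']

lemma phi11_ne_none (y : Option ℚ) : phi11 y ≠ none := by
  cases y with
  | none => simp [phi11]
  | some x => rw [phi11_some]; simp

lemma phi11_iterate_some (x : ℚ) (n : ℕ) :
    phi11^[n] (some x) = some (phiQ^[n] x) := by
  induction n with
  | zero => rfl
  | succ n ih =>
    rw [Function.iterate_succ_apply', Function.iterate_succ_apply', ih, phi11_some]

/-- Every point of `ℙ¹(ℚ)` has infinite forward orbit under
`φ(z) = (z² − 4z + 2)/(z² − 2z + 2)`; equivalently `n ↦ φⁿ(α)` is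
injective. -/
theorem phi11_no_rational_preperiodic (α : Option ℚ) :
    (Set.range fun n : ℕ => phi11^[n] α).Infinite ∧
      Function.Injective fun n : ℕ => phi11^[n] α := by
  have key : ∀ i j : ℕ, i < j → phi11^[i] α ≠ phi11^[j] α := by
    intro i j hij heq
    have hm : phi11^[j - i] (phi11^[i] α) = phi11^[i] α := by
      rw [← Function.iterate_add_apply, show j - i + i = j from by omega]
      exact heq.symm
    have hmpos : 0 < j - i := by omega
    cases hb : phi11^[i] α with
    | none =>
      rw [hb] at hm
      have h9 : phi11^[j - i] (none : Option ℚ) = phi11 (phi11^[j - i - 1] none) := by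
        conv_lhs => rw [show j - i = (j - i - 1) + 1 from by omega]
        exact Function.iterate_succ_apply' _ _ _
      exact phi11_ne_none _ (by rw [← h9]; exact hm)
    | some x =>
      rw [hb, phi11_iterate_some] at hm
      exact phiQ_no_periodic x (j - i) hmpos (Option.some.inj hm)
  have hinj : Function.Injective fun n : ℕ => phi11^[n] α := by
    intro i j h
    by_contra hne
    rcases Nat.lt_or_ge i j with hlt | hge
    · exact key i j hlt h
    · exact key j i (by omega) h.symm
  exact ⟨Set.infinite_range_of_injective hinj, hinj⟩
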